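/- Let Γ be a countable group that admits at least one amenable action on the Cantor set X. Then the set of amenable actions is a dense Gδ subset of S(Γ,X). -/

import Mathlib

open TopologicalSpace

/-- The group structure on the homeomorphism group of `X`,
with `(f * g) x = f (g x)`. -/
instance homeoGroup (X : Type*) [TopologicalSpace X] : Group (X ≃ₜ X) where
  mul f g := g.trans f
  one := Homeomorph.refl X
  inv := Homeomorph.symm
  mul_assoc _ _ _ := Homeomorph.ext fun _ => rfl
  one_mul _ := Homeomorph.ext fun _ => rfl
  mul_one _ := Homeomorph.ext fun _ => rfl
  inv_mul_cancel f := Homeomorph.ext fun x => f.symm_apply_apply x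

/-- The topology on `Homeo(X)` of uniform convergence of a homeomorphism together with
its inverse: for a compact metrizable space `X` the compact-open topology on `C(X, X)`
is the topology of uniform convergence, and we pull back the product topology along
`φ ↦ (φ, φ⁻¹)`. -/
instance homeoTopology (X : Type*) [TopologicalSpace X] : TopologicalSpace (X ≃ₜ X) :=
  TopologicalSpace.induced
    (fun φ : X ≃ₜ X => ((φ : C(X, X)), (φ.symm : C(X, X)))) inferInstance

/-- The space `S(Γ, X)` of actions of `Γ` on `X`, topologized as a subspace of
the product space `∏_Γ Homeo(X)`. -/
instance actionSpaceTopology (Γ X : Type*) [Group Γ] [TopologicalSpace X] :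
    TopologicalSpace (Γ →* (X ≃ₜ X)) :=
  TopologicalSpace.induced (fun α : Γ →* (X ≃ₜ X) => (α : Γ → X ≃ₜ X)) inferInstance

instance : Fact ((1 : ENNReal) ≤ 1) := ⟨le_rfl⟩

/-- An action `α` of `Γ` on `X` is amenable if for every `ε > 0` and every finite
subset `S ⊆ Γ` there is a continuous map `μ : X → Prob(Γ) ⊆ ℓ¹(Γ)`, `x ↦ μ^x`, with
`‖s·μ^x − μ^{α_s x}‖₁ < ε` for all `s ∈ S` and `x ∈ X` (here `(s·μ^x)(t) = μ^x(s⁻¹t)`). -/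
def IsAmenableAction {Γ X : Type*} [Group Γ] [TopologicalSpace X]
    (α : Γ →* (X ≃ₜ X)) : Prop :=
  ∀ ε : ℝ, 0 < ε → ∀ S : Finset Γ,
    ∃ μ : C(X, ↥(lp (fun _ : Γ => ℝ) 1)),
      (∀ (x : X) (t : Γ), 0 ≤ μ x t) ∧
      (∀ x : X, ‖μ x‖ = 1) ∧
      ∀ s ∈ S, ∀ x : X, (∑' t : Γ, |μ x (s⁻¹ * t) - μ (α s x) t|) < ε

set_option linter.unusedSectionVars false
set_option linter.unusedTactic false

section Aux
open Filter Set Topology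

structure IsCPartition {X : Type*} [TopologicalSpace X] (A : Set X) {I : Type*} (Q : I → Set X) : Prop where
  clopen : ∀ i, IsClopen (Q i)
  nonempty : ∀ i, (Q i).Nonempty
  disj : ∀ i j, i ≠ j → Disjoint (Q i) (Q j)
  union : (⋃ i, Q i) = A

theorem IsCPartition.reindex {X : Type*} [TopologicalSpace X] {A : Set X} {I J : Type*}
    {Q : I → Set X} (h : IsCPartition A Q) (e : J ≃ I) : IsCPartition A (Q ∘ e) where
  clopen j := h.clopen _
  nonempty j := h.nonempty _
  disj i j hij := h.disj _ _ (fun hc => hij (e.injective hc))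
  union := by
    rw [← h.union]
    exact le_antisymm (Set.iUnion_subset fun j => Set.subset_iUnion Q (e j))
      (Set.iUnion_subset fun i => by
        simpa using Set.subset_iUnion (Q ∘ e) (e.symm i))

section Split
variable {X : Type*} [TopologicalSpace X] [CompactSpace X] [T2Space X]
  [TotallyDisconnectedSpace X] [PerfectSpace X]

theorem two_points {A : Set X} (hA : IsOpen A) (hne : A.Nonempty) :
    ∃ x ∈ A, ∃ y ∈ A, x ≠ y := by
  obtain ⟨x, hx⟩ := hne
  have h1 : A ∈ 𝓝 x := hA.mem_nhds hx
  have h2 : A ∈ 𝓝[≠] x := mem_nhdsWithin_of_mem_nhds h1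
  obtain ⟨y, hy⟩ := Filter.nonempty_of_mem (Filter.inter_mem h2 self_mem_nhdsWithin)
  exact ⟨x, hx, y, hy.1, fun h => hy.2 h.symm⟩

theorem exists_clopen_split {A : Set X} (hA : IsClopen A) (hne : A.Nonempty) :
    ∃ B C : Set X, IsClopen B ∧ IsClopen C ∧ B.Nonempty ∧ C.Nonempty ∧
      Disjoint B C ∧ B ∪ C = A := by
  obtain ⟨x, hx, y, hy, hxy⟩ := two_points hA.isOpen hne
  obtain ⟨V, hV, hxV, hVA⟩ := compact_exists_isClopen_in_isOpen
    (hA.isOpen.inter (isOpen_compl_singleton (x := y))) ⟨hx, fun h => hxy (Set.mem_singleton_iff.1 h)⟩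
  refine ⟨V, A \ V, hV, hA.diff hV, ⟨x, hxV⟩, ⟨y, hy, fun hyV => (hVA hyV).2 rfl⟩,
    Set.disjoint_sdiff_right, ?_⟩
  rw [Set.union_diff_cancel' (le_refl V) (fun z hz => (hVA hz).1)]

/-- Split a nonempty clopen set into `n+1` nonempty clopen pieces. -/
theorem exists_cpartition_card {A : Set X} (hA : IsClopen A) (hne : A.Nonempty) (n : ℕ) :
    ∃ Q : Fin (n + 1) → Set X, IsCPartition A Q := by
  induction n generalizing A with
  | zero =>
    refine ⟨fun _ => A, ⟨fun _ => hA, fun _ => hne, fun i j hij => absurd ?_ hij, by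
      simpa using Set.iUnion_const A⟩⟩
    · ext; omega
  | succ n ih =>
    obtain ⟨B, C, hB, hC, hBne, hCne, hdisj, hBC⟩ := exists_clopen_split hA hne
    obtain ⟨Q, hQ⟩ := ih hB hBne
    refine ⟨Fin.snoc Q C, ⟨?_, ?_, ?_, ?_⟩⟩
    · intro i
      induction i using Fin.lastCases with
      | last => simpa using hC
      | cast i => simpa using hQ.clopen i
    · intro i
      induction i using Fin.lastCases with
      | last => simpa using hCne
      | cast i => simpa using hQ.nonempty i
    · intro i j hij
      have hsub : ∀ i : Fin (n+1), Q i ⊆ B := fun i => hQ.union ▸ Set.subset_iUnion Q i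
      induction i using Fin.lastCases with
      | last =>
        induction j using Fin.lastCases with
        | last => exact absurd rfl hij
        | cast j => simpa using (hdisj.symm.mono_right (hsub j))
      | cast i =>
        induction j using Fin.lastCases with
        | last => simpa using hdisj.mono_left (hsub i)
        | cast j =>
          have : i ≠ j := fun h => hij (by rw [h])
          simpa using hQ.disj i j this
    · rw [← hBC]
      ext z
      simp only [Set.mem_iUnion, Set.mem_union]
      constructor
      · rintro ⟨i, hi⟩
        induction i using Fin.lastCases with
        | last => right; simpa using hi
        | cast i => left; rw [← hQ.union]; exact Set.mem_iUnion.2 ⟨i, by simpa using hi⟩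
      · rintro (hz | hz)
        · rw [← hQ.union] at hz
          obtain ⟨i, hi⟩ := Set.mem_iUnion.1 hz
          exact ⟨i.castSucc, by rw [Fin.snoc_castSucc]; exact hi⟩
        · exact ⟨Fin.last _, by rw [Fin.snoc_last]; exact hz⟩

end Split

section Fine
variable {X : Type*} [MetricSpace X] [CompactSpace X] [TotallyDisconnectedSpace X]

def MSmall (r : ℝ) (A : Set X) : Prop := ∀ a ∈ A, ∀ b ∈ A, dist a b < r

theorem MSmall.mono {r : ℝ} {A B : Set X} (h : MSmall r A) (hBA : B ⊆ A) : MSmall r B :=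
  fun a ha b hb => h a (hBA ha) b (hBA hb)

/-- A finite cover of `X` by clopen sets of small diameter. -/
theorem exists_fine_cover {ε : ℝ} (hε : 0 < ε) :
    ∃ (n : ℕ) (U : Fin n → Set X), (∀ i, IsClopen (U i) ∧ MSmall ε (U i)) ∧
      ∀ x : X, x ∈ ⋃ i, U i := by
  have hV : ∀ x : X, ∃ V : Set X, IsClopen V ∧ x ∈ V ∧ V ⊆ Metric.ball x (ε / 2) :=
    fun x => compact_exists_isClopen_in_isOpen Metric.isOpen_ball
      (Metric.mem_ball_self (by linarith))
  choose V hVclopen hVmem hVball using hV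
  obtain ⟨t, ht⟩ := isCompact_univ.elim_finite_subcover V (fun x => (hVclopen x).isOpen)
    (fun x _ => Set.mem_iUnion.2 ⟨x, hVmem x⟩)
  refine ⟨t.card, fun i => V (t.equivFin.symm i), fun i => ⟨hVclopen _, ?_⟩, fun x => ?_⟩
  · intro a ha b hb
    have h1 := hVball _ ha
    have h2 := hVball _ hb
    rw [Metric.mem_ball] at h1 h2
    calc dist a b ≤ dist a (t.equivFin.symm i : X) + dist (t.equivFin.symm i : X) b :=
          dist_triangle _ _ _
      _ < ε / 2 + ε / 2 := by rw [dist_comm (t.equivFin.symm i : X) b] at *; exact add_lt_add h1 h2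
      _ = ε := by ring
  · obtain ⟨y, hy⟩ := Set.mem_iUnion.1 (ht (Set.mem_univ x))
    simp only [Set.mem_iUnion] at hy ⊢
    obtain ⟨hyt, hxy⟩ := hy
    exact ⟨t.equivFin ⟨y, hyt⟩, by simpa using hxy⟩

/-- Partition a nonempty clopen set using a clopen cover of small sets. -/
theorem exists_fine_cpartition_aux {ε : ℝ} :
    ∀ (n : ℕ) (U : Fin n → Set X), (∀ i, IsClopen (U i) ∧ MSmall ε (U i)) →
    ∀ (A : Set X), IsClopen A → A.Nonempty → A ⊆ (⋃ i, U i) →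
    ∃ (k : ℕ) (Q : Fin (k + 1) → Set X), IsCPartition A Q ∧ ∀ i, MSmall ε (Q i) := by
  intro n
  induction n with
  | zero =>
    intro U hU A hA hne hcov
    obtain ⟨x, hx⟩ := hne
    obtain ⟨i, -⟩ := Set.mem_iUnion.1 (hcov hx)
    exact absurd i.2 (by omega)
  | succ n ih =>
    intro U hU A hA hne hcov
    set B := A ∩ U (Fin.last n) with hBdef
    set A' := A \ U (Fin.last n) with hA'def
    have hBclopen : IsClopen B := hA.inter (hU _).1
    have hA'clopen : IsClopen A' := hA.diff (hU _).1
    have hBsmall : MSmall ε B := (hU (Fin.last n)).2.mono Set.inter_subset_right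
    rcases Set.eq_empty_or_nonempty A' with hA'e | hA'ne
    · -- A ⊆ U last, so A itself is small
      have hAB : A = B := by
        rw [hBdef]
        rw [Set.diff_eq_empty] at hA'e
        exact (Set.inter_eq_left.2 hA'e).symm
      exact ⟨0, fun _ => A, ⟨fun _ => hA, fun _ => hne,
        fun i j hij => absurd (by ext; omega : i = j) hij, by simpa using Set.iUnion_const A⟩,
        fun _ => hAB ▸ hBsmall⟩
    · have hA'cov : A' ⊆ ⋃ i : Fin n, U i.castSucc := by
        intro x hx
        obtain ⟨i, hi⟩ := Set.mem_iUnion.1 (hcov hx.1)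
        induction i using Fin.lastCases with
        | last => exact absurd hi hx.2
        | cast i => exact Set.mem_iUnion.2 ⟨i, hi⟩
      obtain ⟨k, Q, hQ, hQsmall⟩ := ih (fun i => U i.castSucc) (fun i => hU _) A'
        hA'clopen hA'ne hA'cov
      rcases Set.eq_empty_or_nonempty B with hBe | hBne
      · -- B empty : A = A'
        have hAA' : A = A' := by
          rw [hA'def, Set.diff_eq]
          rw [hBdef] at hBe
          exact (Set.inter_eq_left.2 (Set.subset_compl_iff_disjoint_right.2
            (Set.disjoint_iff_inter_eq_empty.2 hBe))).symm
        exact ⟨k, Q, hAA' ▸ hQ, hQsmall⟩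
      · refine ⟨k + 1, Fin.snoc Q B, ⟨?_, ?_, ?_, ?_⟩, ?_⟩
        · intro i
          induction i using Fin.lastCases with
          | last => simpa using hBclopen
          | cast i => simpa using hQ.clopen i
        · intro i
          induction i using Fin.lastCases with
          | last => simpa using hBne
          | cast i => simpa using hQ.nonempty i
        · intro i j hij
          have hsub : ∀ i : Fin (k+1), Q i ⊆ A' := fun i => hQ.union ▸ Set.subset_iUnion Q i
          have hdisj : Disjoint A' B := Set.disjoint_of_subset_right
            Set.inter_subset_right disjoint_sdiff_self_left
          induction i using Fin.lastCases with
          | last =>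
            induction j using Fin.lastCases with
            | last => exact absurd rfl hij
            | cast j => simpa using (hdisj.symm.mono_right (hsub j))
          | cast i =>
            induction j using Fin.lastCases with
            | last => simpa using hdisj.mono_left (hsub i)
            | cast j =>
              have : i ≠ j := fun h => hij (by rw [h])
              simpa using hQ.disj i j this
        · ext z
          simp only [Set.mem_iUnion]
          constructor
          · rintro ⟨i, hi⟩
            induction i using Fin.lastCases with
            | last =>
              rw [Fin.snoc_last] at hi
              exact hi.1
            | cast i =>
              rw [Fin.snoc_castSucc] at hi
              exact (hQ.union ▸ Set.subset_iUnion Q i hi).1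
          · intro hz
            by_cases hzU : z ∈ U (Fin.last n)
            · exact ⟨Fin.last _, by rw [Fin.snoc_last]; exact ⟨hz, hzU⟩⟩
            · have : z ∈ A' := ⟨hz, hzU⟩
              rw [← hQ.union] at this
              obtain ⟨i, hi⟩ := Set.mem_iUnion.1 this
              exact ⟨i.castSucc, by rw [Fin.snoc_castSucc]; exact hi⟩
        · intro i
          induction i using Fin.lastCases with
          | last => simpa using hBsmall
          | cast i => simpa using hQsmall i

/-- Every nonempty clopen subset of a Cantor-like space admits, for every `ε > 0`,
a partition into finitely many nonempty clopen sets of diameter `< ε`. -/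
theorem exists_fine_cpartition {ε : ℝ} (hε : 0 < ε) {A : Set X} (hA : IsClopen A)
    (hne : A.Nonempty) :
    ∃ (k : ℕ) (Q : Fin (k + 1) → Set X), IsCPartition A Q ∧ ∀ i, MSmall ε (Q i) := by
  obtain ⟨n, U, hU, hcov⟩ := exists_fine_cover (X := X) hε
  have : A ⊆ ⋃ i, U i := fun x _ => hcov x
  exact exists_fine_cpartition_aux n U hU A hA hne this

/-- Partition of a nonempty clopen set into exactly `2^m` small nonempty clopen pieces,
for all sufficiently large `m`. -/
theorem exists_pow_cpartition [PerfectSpace X] {ε : ℝ} (hε : 0 < ε) {A : Set X}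
    (hA : IsClopen A) (hne : A.Nonempty) :
    ∃ m₀ : ℕ, ∀ m, m₀ ≤ m →
      ∃ R : (Fin m → Bool) → Set X, IsCPartition A R ∧ ∀ b, MSmall ε (R b) := by
  obtain ⟨k, Q, hQ, hQsmall⟩ := exists_fine_cpartition hε hA hne
  refine ⟨k + 1, fun m hm => ?_⟩
  have h2m : k + 1 ≤ 2 ^ m := le_trans hm (Nat.le_of_lt (Nat.lt_two_pow_self (n := m)))
  set r := 2 ^ m - (k + 1) with hr
  obtain ⟨S, hS⟩ := exists_cpartition_card (hQ.clopen (Fin.last k)) (hQ.nonempty (Fin.last k)) r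
  have hSsub : ∀ j, S j ⊆ Q (Fin.last k) := fun j => hS.union ▸ Set.subset_iUnion S j
  set T : Fin k ⊕ Fin (r + 1) → Set X := Sum.elim (fun i => Q i.castSucc) S with hT
  have hTpart : IsCPartition A T := by
    constructor
    · rintro (i | j)
      · exact hQ.clopen _
      · exact hS.clopen _
    · rintro (i | j)
      · exact hQ.nonempty _
      · exact hS.nonempty _
    · rintro (i | j) (i' | j') hne'
      · exact hQ.disj _ _ (fun h => hne' (by rw [Fin.castSucc_inj.1 h]))
      · exact (hQ.disj i.castSucc (Fin.last k) (Fin.ne_last_of_lt i.castSucc_lt_last)).mono_right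
          (hSsub j')
      · exact ((hQ.disj i'.castSucc (Fin.last k)
          (Fin.ne_last_of_lt i'.castSucc_lt_last)).mono_right (hSsub j)).symm
      · exact hS.disj _ _ (fun h => hne' (by rw [h]))
    · ext z
      simp only [Set.mem_iUnion]
      constructor
      · rintro ⟨i | j, hi⟩
        · exact hQ.union ▸ Set.subset_iUnion Q _ hi
        · exact hQ.union ▸ Set.subset_iUnion Q _ (hSsub j hi)
      · intro hz
        rw [← hQ.union] at hz
        obtain ⟨i, hi⟩ := Set.mem_iUnion.1 hz
        induction i using Fin.lastCases with
        | last =>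
          rw [← hS.union] at hi
          obtain ⟨j, hj⟩ := Set.mem_iUnion.1 hi
          exact ⟨Sum.inr j, hj⟩
        | cast i => exact ⟨Sum.inl i, hi⟩
  have hcard : Fintype.card (Fin m → Bool) = Fintype.card (Fin k ⊕ Fin (r + 1)) := by
    simp [Fintype.card_fun]
    omega
  obtain ⟨e⟩ : Nonempty ((Fin m → Bool) ≃ (Fin k ⊕ Fin (r + 1))) :=
    ⟨Fintype.equivOfCardEq hcard⟩
  refine ⟨T ∘ e, hTpart.reindex e, fun b => ?_⟩
  rcases hb : e b with i | j
  · simpa [hb, hT] using hQsmall i.castSucc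
  · simpa [hb, hT] using (hQsmall (Fin.last k)).mono (hSsub j)

end Fine

section Chain
variable (X : Type*) [MetricSpace X] [CompactSpace X] [TotallyDisconnectedSpace X]
  [PerfectSpace X] [Nonempty X]

/-- A partition of the whole space into nonempty clopen cells indexed by `Fin M → Bool`. -/
structure CPart where
  M : ℕ
  Q : (Fin M → Bool) → Set X
  part : IsCPartition Set.univ Q

variable {X}

noncomputable def CPart.idx (P : CPart X) (x : X) : Fin P.M → Bool :=
  (Set.mem_iUnion.1 (P.part.union.symm ▸ Set.mem_univ x : x ∈ ⋃ b, P.Q b)).choose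

theorem CPart.mem_idx (P : CPart X) (x : X) : x ∈ P.Q (P.idx x) :=
  (Set.mem_iUnion.1 (P.part.union.symm ▸ Set.mem_univ x : x ∈ ⋃ b, P.Q b)).choose_spec

theorem CPart.idx_unique (P : CPart X) {x : X} {b : Fin P.M → Bool} (h : x ∈ P.Q b) :
    b = P.idx x := by
  by_contra hne
  exact Set.disjoint_iff.1 (P.part.disj b _ hne) ⟨h, P.mem_idx x⟩ 

theorem cstep (P : CPart X) {ε : ℝ} (hε : 0 < ε) :
    ∃ (P' : CPart X) (h : P.M + 1 ≤ P'.M),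
      (∀ b, MSmall ε (P'.Q b)) ∧
      ∀ b : Fin P'.M → Bool, P'.Q b ⊆ P.Q (fun i => b (Fin.castLE (Nat.le_of_succ_le h) i)) := by
  have h0 : ∀ b : Fin P.M → Bool, ∃ m₀ : ℕ, ∀ m, m₀ ≤ m →
      ∃ R : (Fin m → Bool) → Set X, IsCPartition (P.Q b) R ∧ ∀ c, MSmall ε (R c) :=
    fun b => exists_pow_cpartition hε (P.part.clopen b) (P.part.nonempty b)
  choose m₀ hm₀ using h0
  set m : ℕ := (Finset.univ.sup m₀) + 1 with hm
  have hmb : ∀ b, m₀ b ≤ m := fun b =>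
    le_trans (Finset.le_sup (Finset.mem_univ b)) (Nat.le_succ _)
  have h1 : ∀ b : Fin P.M → Bool, ∃ R : (Fin m → Bool) → Set X,
      IsCPartition (P.Q b) R ∧ ∀ c, MSmall ε (R c) := fun b => hm₀ b m (hmb b)
  choose R hR hRsmall using h1
  have hRsub : ∀ b c, R b c ⊆ P.Q b := fun b c => (hR b).union ▸ Set.subset_iUnion (R b) c
  set fr : (Fin (P.M + m) → Bool) → (Fin P.M → Bool) :=
    fun b i => b (Fin.castAdd m i) with hfr
  set bk : (Fin (P.M + m) → Bool) → (Fin m → Bool) :=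
    fun b j => b (Fin.natAdd P.M j) with hbk
  have hsplit : ∀ b c : Fin (P.M + m) → Bool, fr b = fr c → bk b = bk c → b = c := by
    intro b c h1 h2
    funext i
    induction i using Fin.addCases with
    | left i => exact congrFun h1 i
    | right i => exact congrFun h2 i
  refine ⟨⟨P.M + m, fun b => R (fr b) (bk b), ⟨fun b => (hR (fr b)).clopen _,
    fun b => (hR (fr b)).nonempty _, ?_, ?_⟩⟩, show P.M + 1 ≤ P.M + m by omega,
    fun b => hRsmall _ _, fun b x hx => hRsub (fr b) (bk b) hx⟩
  · intro b c hbc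
    by_cases hf : fr b = fr c
    · have hb : bk b ≠ bk c := fun h => hbc (hsplit b c hf h)
      rw [hf]
      exact (hR (fr c)).disj _ _ hb
    · exact ((P.part.disj _ _ hf).mono (hRsub _ _) (hRsub _ _))
  · ext x
    simp only [Set.mem_iUnion, Set.mem_univ, iff_true]
    have hx : x ∈ P.Q (P.idx x) := P.mem_idx x
    rw [← (hR (P.idx x)).union] at hx
    obtain ⟨c, hc⟩ := Set.mem_iUnion.1 hx
    refine ⟨Fin.append (P.idx x) c, ?_⟩
    have e1 : fr (Fin.append (P.idx x) c) = P.idx x := funext fun i => Fin.append_left _ _ i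
    have e2 : bk (Fin.append (P.idx x) c) = c := funext fun j => Fin.append_right _ _ j
    rw [e1, e2]
    exact hc

variable (X)

noncomputable def chain : ℕ → CPart X
  | 0 => ⟨0, fun _ => Set.univ,
      ⟨fun _ => isClopen_univ, fun _ => Set.univ_nonempty,
        fun b c h => absurd (funext fun i => i.elim0) h, by
          simpa using Set.iUnion_const Set.univ⟩⟩
  | (t + 1) => (cstep (chain t) (by positivity : (0:ℝ) < 1 / (t + 1))).choose

theorem chain_spec (t : ℕ) :
    ∃ h : (chain X t).M + 1 ≤ (chain X (t+1)).M,
      (∀ b, MSmall (1 / (t+1)) ((chain X (t+1)).Q b)) ∧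
      ∀ b, (chain X (t+1)).Q b ⊆
        (chain X t).Q (fun i => b (Fin.castLE (Nat.le_of_succ_le h) i)) := by
  exact (cstep (chain X t) (by positivity : (0:ℝ) < 1 / (t + 1))).choose_spec

theorem chain_M_le {t t' : ℕ} (h : t ≤ t') : (chain X t).M ≤ (chain X t').M := by
  induction t', h using Nat.le_induction with
  | base => exact le_rfl
  | succ t'' h'' ih =>
    obtain ⟨h', -, -⟩ := chain_spec X t''
    omega

theorem chain_M_ge (t : ℕ) : t ≤ (chain X t).M := by
  induction t with
  | zero => exact Nat.zero_le _
  | succ t ih =>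
    obtain ⟨h', -, -⟩ := chain_spec X t
    omega

theorem chain_small (t : ℕ) (b : Fin (chain X (t+1)).M → Bool) :
    MSmall (1 / (t+1)) ((chain X (t+1)).Q b) :=
  (chain_spec X t).choose_spec.1 b

theorem chain_sub {t t' : ℕ} (h : t ≤ t') (b : Fin (chain X t').M → Bool) :
    (chain X t').Q b ⊆ (chain X t).Q (fun i => b (Fin.castLE (chain_M_le X h) i)) := by
  induction t', h using Nat.le_induction with
  | base => exact fun x hx => hx
  | succ t'' h'' ih =>
    obtain ⟨hM, -, hsub⟩ := chain_spec X t''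
    intro x hx
    exact ih _ (hsub b hx)

theorem idx_coherent {t t' : ℕ} (h : t ≤ t') (x : X) :
    (chain X t).idx x = fun i => (chain X t').idx x (Fin.castLE (chain_M_le X h) i) :=
  ((chain X t).idx_unique (chain_sub X h _ ((chain X t').mem_idx x))).symm

noncomputable def cf (x : X) (n : ℕ) : Bool :=
  (chain X (n+1)).idx x ⟨n, lt_of_lt_of_le (Nat.lt_succ_self n) (chain_M_ge X (n+1))⟩

theorem cf_eq (t : ℕ) (x : X) (i : Fin (chain X t).M) : cf X x i.val = (chain X t).idx x i := by
  set T := max t (i.val + 1) with hT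
  have h1 : t ≤ T := le_max_left _ _
  have h2 : i.val + 1 ≤ T := le_max_right _ _
  have e1 := idx_coherent X h1 x
  have e2 := idx_coherent X h2 x
  have hiT : i.val < (chain X T).M := lt_of_lt_of_le (by omega) (chain_M_le X h2 |>.trans' (chain_M_ge X _) |>.trans (le_refl _))
  calc cf X x i.val
      = (chain X T).idx x ⟨i.val, hiT⟩ := by
        show (chain X (i.val+1)).idx x _ = _
        rw [e2]
        rfl
    _ = (chain X t).idx x i := by rw [e1]; rfl

theorem cf_injective : Function.Injective (fun x => cf X x) := by
  intro x y hxy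
  by_contra hne
  have hd : 0 < dist x y := dist_pos.2 hne
  obtain ⟨n, hn⟩ := exists_nat_one_div_lt hd
  have hidx : (chain X (n+1)).idx x = (chain X (n+1)).idx y := by
    funext i
    rw [← cf_eq X (n+1) x i, ← cf_eq X (n+1) y i]
    exact congrFun hxy i.val
  have hx := (chain X (n+1)).mem_idx x
  have hy := (chain X (n+1)).mem_idx y
  rw [hidx] at hx
  exact absurd (chain_small X n _ x hx y hy) (by push_cast; linarith)

theorem cf_surjective : Function.Surjective (fun x => cf X x) := by
  intro b
  set C : ℕ → Set X := fun t => (chain X t).Q (fun i => b i.val) with hC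
  have hsub : ∀ t, C (t+1) ⊆ C t := by
    intro t
    exact chain_sub X (Nat.le_succ t) _
  have hne : ∀ t, (C t).Nonempty := fun t => (chain X t).part.nonempty _
  obtain ⟨x, hx⟩ := IsCompact.nonempty_iInter_of_sequence_nonempty_isCompact_isClosed C hsub hne
    (((chain X 0).part.clopen _).isClosed.isCompact) (fun t => ((chain X t).part.clopen _).isClosed)
  refine ⟨x, ?_⟩
  funext n
  have hxC : x ∈ C (n+1) := Set.mem_iInter.1 hx (n+1)
  have := (chain X (n+1)).idx_unique hxC
  show (chain X (n+1)).idx x _ = b n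
  rw [← this]

theorem cf_continuous : Continuous (fun x => cf X x) := by
  refine continuous_pi fun n => ?_
  rw [continuous_discrete_rng]
  intro v
  have : (fun x => cf X x n) ⁻¹' {v} =
      ⋃ (c : Fin (chain X (n+1)).M → Bool)
        (_ : c ⟨n, lt_of_lt_of_le (Nat.lt_succ_self n) (chain_M_ge X (n+1))⟩ = v),
        (chain X (n+1)).Q c := by
    ext x
    simp only [Set.mem_preimage, Set.mem_singleton_iff, Set.mem_iUnion]
    constructor
    · intro hv
      exact ⟨(chain X (n+1)).idx x, hv, (chain X (n+1)).mem_idx x⟩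
    · rintro ⟨c, hcv, hxc⟩
      rw [show cf X x n = (chain X (n+1)).idx x _ from rfl, ← (chain X (n+1)).idx_unique hxc]
      exact hcv
  rw [this]
  exact isOpen_iUnion fun c => isOpen_iUnion fun _ => ((chain X (n+1)).part.clopen c).isOpen

theorem exists_cantor_homeo_metric : Nonempty (X ≃ₜ (ℕ → Bool)) :=
  ⟨Continuous.homeoOfEquivCompactToT2
    (f := Equiv.ofBijective (fun x => cf X x) ⟨cf_injective X, cf_surjective X⟩)
    (cf_continuous X)⟩

end Chain

section Assembly

/-- An open nonempty subset of a perfect space is perfect. -/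
theorem perfectSpace_subtype {X : Type*} [TopologicalSpace X] [PerfectSpace X]
    {A : Set X} (hA : IsOpen A) : PerfectSpace A := by
  rw [perfectSpace_iff_forall_not_isolated]
  intro a
  rw [show (𝓝[≠] a) = 𝓝[{a}ᶜ] a from rfl, ← mem_closure_iff_nhdsWithin_neBot, mem_closure_iff]
  intro o ho hao
  obtain ⟨o', ho', rfl⟩ := isOpen_induced_iff.1 ho
  have h1 : (o' ∩ A) ∈ 𝓝 (a : X) := (ho'.inter hA).mem_nhds ⟨hao, a.2⟩
  have h2 : ((o' ∩ A) ∩ {(a : X)}ᶜ).Nonempty :=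
    Filter.nonempty_of_mem (Filter.inter_mem (mem_nhdsWithin_of_mem_nhds h1)
      self_mem_nhdsWithin)
  obtain ⟨y, ⟨hyo, hyA⟩, hyne⟩ := h2
  exact ⟨⟨y, hyA⟩, hyo, fun h => hyne (by
    rw [Set.mem_singleton_iff] at h
    exact congrArg Subtype.val h)⟩

/-- The explicit "interleaving" homeomorphism `2^ℕ × 2^ℕ ≃ₜ 2^ℕ`. -/
noncomputable def cantorPairHomeo : ((ℕ → Bool) × (ℕ → Bool)) ≃ₜ (ℕ → Bool) := by
  refine Continuous.homeoOfEquivCompactToT2 (f := {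
    toFun := fun p n => if n % 2 = 0 then p.1 (n / 2) else p.2 (n / 2)
    invFun := fun z => (fun k => z (2 * k), fun k => z (2 * k + 1))
    left_inv := ?_
    right_inv := ?_ }) ?_
  · intro p
    refine Prod.ext ?_ ?_ <;> funext k
    · have h1 : (2 * k) % 2 = 0 := by omega
      have h2 : (2 * k) / 2 = k := by omega
      simp [h1, h2]
    · have h1 : (2 * k + 1) % 2 = 1 := by omega
      have h2 : (2 * k + 1) / 2 = k := by omega
      simp [h1, h2]
  · intro z
    funext n
    by_cases h : n % 2 = 0
    · simp only [if_pos h]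
      congr 1
      omega
    · simp only [if_neg h]
      congr 1
      omega
  · refine continuous_pi fun n => ?_
    show Continuous fun p : (ℕ → Bool) × (ℕ → Bool) =>
      if n % 2 = 0 then p.1 (n / 2) else p.2 (n / 2)
    by_cases h : n % 2 = 0
    · simpa only [if_pos h, Function.comp_def] using (continuous_apply (n / 2)).comp continuous_fst
    · simpa only [if_neg h, Function.comp_def] using (continuous_apply (n / 2)).comp continuous_snd

variable {X : Type*} [MetricSpace X] [CompactSpace X]

/-- The canonical homeomorphism from the disjoint union of the pieces of a clopen
partition to the whole space. -/
noncomputable def sigHomeo {k : ℕ} {A : Fin (k+1) → Set X}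
    (h : IsCPartition (Set.univ : Set X) A) : (Σ i, ↥(A i)) ≃ₜ X := by
  haveI : ∀ i, CompactSpace ↥(A i) := fun i =>
    isCompact_iff_compactSpace.1 ((h.clopen i).isClosed.isCompact)
  refine Continuous.homeoOfEquivCompactToT2
    (f := Equiv.ofBijective (fun p => (p.2 : X)) ⟨?_, ?_⟩) ?_
  · rintro ⟨i, a⟩ ⟨j, b⟩ hab
    simp only at hab
    by_cases hij : i = j
    · subst hij
      rw [Subtype.ext hab]
    · exact absurd (Set.disjoint_iff.1 (h.disj i j hij) ⟨a.2, hab ▸ b.2⟩) (Set.notMem_empty _)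
  · intro x
    have : x ∈ ⋃ i, A i := h.union.symm ▸ Set.mem_univ x
    obtain ⟨i, hi⟩ := Set.mem_iUnion.1 this
    exact ⟨⟨i, ⟨x, hi⟩⟩, rfl⟩
  · exact continuous_sigma fun i => continuous_subtype_val

/-- Homeomorphism between sigma types from componentwise homeomorphisms. -/
def sigCongrHomeo {ι : Type*} {Y Z : ι → Type*} [∀ i, TopologicalSpace (Y i)]
    [∀ i, TopologicalSpace (Z i)] (h : ∀ i, Y i ≃ₜ Z i) : (Σ i, Y i) ≃ₜ (Σ i, Z i) where
  toEquiv := Equiv.sigmaCongrRight (fun i => (h i).toEquiv)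
  continuous_toFun := continuous_sigma fun i => (continuous_sigmaMk (σ := Z)).comp (h i).continuous
  continuous_invFun := continuous_sigma fun i =>
    (continuous_sigmaMk (σ := Y)).comp (h i).symm.continuous

end Assembly

section SmallHomeo
variable (X : Type*) [MetricSpace X] [CompactSpace X] [TotallyDisconnectedSpace X]
  [PerfectSpace X] [Nonempty X]

/-- On a Cantor-like metric space, there are homeomorphisms `X × X ≃ₜ X` moving first
coordinates as little as we wish. -/
theorem exists_small_homeo {δ : ℝ} (hδ : 0 < δ) :
    ∃ ψ : (X × X) ≃ₜ X, ∀ p : X × X, dist (ψ p) p.1 < δ := by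
  obtain ⟨k, A, hA, hAsmall⟩ := exists_fine_cpartition (X := X) hδ isClopen_univ Set.univ_nonempty
  haveI hcs : ∀ i, CompactSpace ↥(A i) := fun i =>
    isCompact_iff_compactSpace.1 ((hA.clopen i).isClosed.isCompact)
  haveI hps : ∀ i, PerfectSpace ↥(A i) := fun i => perfectSpace_subtype (hA.clopen i).isOpen
  haveI hns : ∀ i, Nonempty ↥(A i) := fun i => (hA.nonempty i).to_subtype
  have eA : ∀ i, Nonempty (↥(A i) ≃ₜ (ℕ → Bool)) := fun i => exists_cantor_homeo_metric ↥(A i)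
  set e : ∀ i, ↥(A i) ≃ₜ (ℕ → Bool) := fun i => (eA i).some with he
  set eX : X ≃ₜ (ℕ → Bool) := (exists_cantor_homeo_metric X).some with heX
  set hprod : ∀ i, (↥(A i) × X) ≃ₜ ↥(A i) :=
    fun i => ((e i).prodCongr eX).trans (cantorPairHomeo.trans (e i).symm) with hhp
  set sig := sigHomeo hA with hsig
  set ψ : (X × X) ≃ₜ X :=
    ((sig.symm.prodCongr (Homeomorph.refl X)).trans
      ((Homeomorph.sigmaProdDistrib).trans ((sigCongrHomeo hprod).trans sig))) with hψ
  refine ⟨ψ, fun p => ?_⟩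
  obtain ⟨x, y⟩ := p
  set q := sig.symm x with hq
  have hx : (q.2 : X) = x := sig.apply_symm_apply x
  have hpsi : ψ (x, y) = ((hprod q.1 (q.2, y) : ↥(A q.1)) : X) := rfl
  rw [hpsi]
  exact hAsmall q.1 _ (hprod q.1 (q.2, y)).2 x (hx ▸ q.2.2)

end SmallHomeo



section L1
variable {Γ : Type*} [Group Γ]

theorem l1_summable (f : ↥(lp (fun _ : Γ => ℝ) 1)) : Summable fun t => |f t| := by
  have h := lp.memℓp f
  rw [memℓp_gen_iff (by norm_num : 0 < (1 : ENNReal).toReal)] at h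
  simpa using h

theorem l1_norm (f : ↥(lp (fun _ : Γ => ℝ) 1)) : ‖f‖ = ∑' t, |f t| := by
  rw [lp.norm_eq_tsum_rpow (by norm_num : 0 < (1 : ENNReal).toReal) f]
  simp [Real.rpow_one]

theorem l1_summable_shift (s : Γ) (f : ↥(lp (fun _ : Γ => ℝ) 1)) :
    Summable fun t => |f (s⁻¹ * t)| := by
  have h := (l1_summable f).comp_injective (mul_right_injective s⁻¹)
  exact h

theorem summable_D (s : Γ) (f g : ↥(lp (fun _ : Γ => ℝ) 1)) :
    Summable fun t => |f (s⁻¹ * t) - g t| := by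
  refine Summable.of_nonneg_of_le (fun t => abs_nonneg _) (fun t => ?_)
    ((l1_summable_shift s f).add (l1_summable g))
  exact abs_sub _ _

theorem D_le (s : Γ) (f g g' : ↥(lp (fun _ : Γ => ℝ) 1)) :
    ∑' t, |f (s⁻¹ * t) - g t| ≤ (∑' t, |f (s⁻¹ * t) - g' t|) + ‖g' - g‖ := by
  have hsum2 : Summable fun t : Γ => |g' t - g t| := by
    have := l1_summable (g' - g)
    simpa [lp.coeFn_sub, Pi.sub_apply] using this
  have h1 : ∀ t : Γ, |f (s⁻¹ * t) - g t| ≤ |f (s⁻¹ * t) - g' t| + |g' t - g t| := by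
    intro t
    calc |f (s⁻¹ * t) - g t| = |(f (s⁻¹ * t) - g' t) + (g' t - g t)| := by ring_nf
      _ ≤ _ := abs_add_le _ _
  calc ∑' t, |f (s⁻¹ * t) - g t|
      ≤ ∑' t, (|f (s⁻¹ * t) - g' t| + |g' t - g t|) :=
        Summable.tsum_le_tsum h1 (summable_D s f g) ((summable_D s f g').add hsum2)
    _ = (∑' t, |f (s⁻¹ * t) - g' t|) + ∑' t, |g' t - g t| :=
        Summable.tsum_add (summable_D s f g') hsum2
    _ = (∑' t, |f (s⁻¹ * t) - g' t|) + ‖g' - g‖ := by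
        rw [l1_norm (g' - g)]
        congr 1

end L1

section Gdelta
variable {Γ X : Type*} [Group Γ] [MetricSpace X] [CompactSpace X]

theorem continuous_evC (s : Γ) :
    Continuous fun α : Γ →* (X ≃ₜ X) => ((α s : X ≃ₜ X) : C(X, X)) := by
  have h1 : Continuous fun α : Γ →* (X ≃ₜ X) => (α : Γ → X ≃ₜ X) := continuous_induced_dom
  have h2 : Continuous fun g : Γ → X ≃ₜ X => g s := continuous_apply s
  have h3 : Continuous fun φ : X ≃ₜ X => ((φ : C(X, X)), (φ.symm : C(X, X))) :=
    continuous_induced_dom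
  exact (continuous_fst.comp h3).comp (h2.comp h1)

def AmenSet (Γ X : Type*) [Group Γ] [TopologicalSpace X] (ε : ℝ) (S : Finset Γ) :
    Set (Γ →* (X ≃ₜ X)) :=
  {α | ∃ μ : C(X, ↥(lp (fun _ : Γ => ℝ) 1)),
      (∀ (x : X) (t : Γ), 0 ≤ μ x t) ∧
      (∀ x : X, ‖μ x‖ = 1) ∧
      ∀ s ∈ S, ∀ x : X, (∑' t : Γ, |μ x (s⁻¹ * t) - μ (α s x) t|) < ε}

theorem amen_eq_iInter :
    {α : Γ →* (X ≃ₜ X) | IsAmenableAction α} =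
      ⋂ p : ℕ × Finset Γ, AmenSet Γ X (1 / (p.1 + 1)) p.2 := by
  ext α
  simp only [Set.mem_iInter, Set.mem_setOf_eq]
  constructor
  · intro h p
    exact h _ (by positivity) p.2
  · intro h ε hε S
    obtain ⟨n, hn⟩ := exists_nat_one_div_lt hε
    obtain ⟨μ, h1, h2, h3⟩ := h (n, S)
    exact ⟨μ, h1, h2, fun s hs x => lt_trans (h3 s hs x) hn⟩

theorem amenSet_nhds {ε η : ℝ} (hεη : η < ε) {S : Finset Γ} {α : Γ →* (X ≃ₜ X)}
    (hα : α ∈ AmenSet Γ X η S) :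
    ∃ O : Set (Γ →* (X ≃ₜ X)), IsOpen O ∧ α ∈ O ∧ O ⊆ AmenSet Γ X ε S := by
  obtain ⟨μ, hpos, hnorm, hbd⟩ := hα
  have hgap : 0 < (ε - η) / 2 := by linarith
  have hunif : UniformContinuous fun x => μ x :=
    CompactSpace.uniformContinuous_of_continuous μ.continuous
  rw [Metric.uniformContinuous_iff] at hunif
  obtain ⟨δ', hδ'pos, hδ'⟩ := hunif ((ε - η) / 2) hgap
  refine ⟨⋂ s ∈ S, (fun β : Γ →* (X ≃ₜ X) => ((β s : X ≃ₜ X) : C(X, X))) ⁻¹'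
      (Metric.ball ((α s : X ≃ₜ X) : C(X, X)) δ'), ?_, ?_, ?_⟩
  · exact isOpen_biInter_finset fun s _ => Metric.isOpen_ball.preimage (continuous_evC s)
  · exact Set.mem_iInter₂.2 fun s hs => Metric.mem_ball_self hδ'pos
  · intro β hβ
    refine ⟨μ, hpos, hnorm, fun s hs x => ?_⟩
    have hball := Set.mem_iInter₂.1 hβ s hs
    have hd0 : dist (((β s : X ≃ₜ X) : C(X, X)) x) (((α s : X ≃ₜ X) : C(X, X)) x) < δ' :=
      lt_of_le_of_lt (ContinuousMap.dist_apply_le_dist x) (Metric.mem_ball.1 hball)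
    have hd : dist (β s x) (α s x) < δ' := hd0
    have hmu : ‖μ (α s x) - μ (β s x)‖ < (ε - η) / 2 := by
      rw [← dist_eq_norm]
      exact hδ' (by rwa [dist_comm] at hd)
    calc ∑' t, |μ x (s⁻¹ * t) - μ (β s x) t|
        ≤ (∑' t, |μ x (s⁻¹ * t) - μ (α s x) t|) + ‖μ (α s x) - μ (β s x)‖ :=
          D_le s (μ x) (μ (β s x)) (μ (α s x))
      _ < η + (ε - η) / 2 := add_lt_add (hbd s hs x) hmu
      _ < ε := by linarith

theorem amen_isGdelta [Countable Γ] :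
    IsGδ {α : Γ →* (X ≃ₜ X) | IsAmenableAction α} := by
  classical
  have key : ∀ p : ℕ × Finset Γ, ∃ O : Set (Γ →* (X ≃ₜ X)),
      IsOpen O ∧ {α : Γ →* (X ≃ₜ X) | IsAmenableAction α} ⊆ O ∧
      O ⊆ AmenSet Γ X (1 / (p.1 + 1)) p.2 := by
    rintro ⟨n, S⟩
    have hlt : (1 : ℝ) / (n + 2) < 1 / (n + 1) := by
      apply one_div_lt_one_div_of_lt <;> push_cast <;> linarith
    have hO : ∀ α : Γ →* (X ≃ₜ X), IsAmenableAction α →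
        ∃ O : Set (Γ →* (X ≃ₜ X)), IsOpen O ∧ α ∈ O ∧ O ⊆ AmenSet Γ X (1 / (n + 1)) S := by
      intro α hα
      have hmem : α ∈ AmenSet Γ X (1 / (n + 2)) S := hα _ (by positivity) S
      exact amenSet_nhds hlt hmem
    choose O hOopen hOmem hOsub using hO
    refine ⟨⋃ (α : Γ →* (X ≃ₜ X)) (hα : IsAmenableAction α), O α hα, ?_, ?_, ?_⟩
    · exact isOpen_iUnion fun α => isOpen_iUnion fun hα => hOopen α hα
    · exact fun α hα => Set.mem_iUnion.2 ⟨α, Set.mem_iUnion.2 ⟨hα, hOmem α hα⟩⟩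
    · refine Set.iUnion_subset fun α => Set.iUnion_subset fun hα => hOsub α hα
  choose O hOopen hsub1 hsub2 using key
  have heq : {α : Γ →* (X ≃ₜ X) | IsAmenableAction α} = ⋂ p, O p := by
    apply le_antisymm
    · exact Set.subset_iInter fun p => hsub1 p
    · intro α hα
      rw [amen_eq_iInter]
      exact Set.mem_iInter.2 fun p => hsub2 p (Set.mem_iInter.1 hα p)
  rw [heq]
  exact IsGδ.iInter fun p => (hOopen p).isGδ

end Gdelta

section Density
variable {Γ X : Type*} [Group Γ] [MetricSpace X] [CompactSpace X] [Nonempty X]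

theorem finset_exists_pos {S : Finset Γ} {P : Γ → ℝ → Prop}
    (hmono : ∀ s δ δ', 0 < δ' → δ' ≤ δ → P s δ → P s δ')
    (hP : ∀ s ∈ S, ∃ δ, 0 < δ ∧ P s δ) :
    ∃ δ, 0 < δ ∧ ∀ s ∈ S, P s δ := by
  classical
  induction S using Finset.induction with
  | empty => exact ⟨1, one_pos, by simp⟩
  | @insert a S ha ih =>
    obtain ⟨δ, hδ, hall⟩ := ih (fun t ht => hP t (Finset.mem_insert_of_mem ht))
    obtain ⟨δa, hδa, hPa⟩ := hP a (Finset.mem_insert_self a S)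
    refine ⟨min δ δa, lt_min hδ hδa, fun t ht => ?_⟩
    rcases Finset.mem_insert.1 ht with rfl | ht
    · exact hmono t δa _ (lt_min hδ hδa) (min_le_right _ _) hPa
    · exact hmono t δ _ (lt_min hδ hδa) (min_le_left _ _) (hall t ht)

/-- The diagonal product of two actions. -/
def prodHom (β α : Γ →* (X ≃ₜ X)) : Γ →* ((X × X) ≃ₜ (X × X)) where
  toFun s := (β s).prodCongr (α s)
  map_one' := by
    apply Homeomorph.ext
    intro p
    show ((β 1).prodCongr (α 1)) p = p
    rw [map_one, map_one]
    rfl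
  map_mul' s t := by
    apply Homeomorph.ext
    intro p
    show ((β (s * t)).prodCongr (α (s * t))) p =
      (((β s).prodCongr (α s)) * ((β t).prodCongr (α t))) p
    rw [map_mul, map_mul]
    rfl

/-- Conjugation by a fixed homeomorphism, as a homomorphism of homeomorphism groups. -/
def conjHom {Y : Type*} [TopologicalSpace Y] (ψ : Y ≃ₜ X) : (Y ≃ₜ Y) →* (X ≃ₜ X) where
  toFun f := ψ.symm.trans (f.trans ψ)
  map_one' := by
    apply Homeomorph.ext
    intro x
    exact ψ.apply_symm_apply x
  map_mul' f g := by
    apply Homeomorph.ext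
    intro x
    show ψ ((f * g) (ψ.symm x)) = ψ (f (ψ.symm (ψ (g (ψ.symm x)))))
    rw [ψ.symm_apply_apply]
    rfl

/-- Amenability passes from a factor: if `β'` maps onto the amenable action `α₀` via an
equivariant continuous map, then `β'` is amenable. -/
theorem IsAmenableAction.factor {β' α₀ : Γ →* (X ≃ₜ X)} (hα₀ : IsAmenableAction α₀)
    (p : C(X, X)) (hp : ∀ (s : Γ) (z : X), p (β' s z) = α₀ s (p z)) :
    IsAmenableAction β' := by
  intro ε hε S
  obtain ⟨μ, h1, h2, h3⟩ := hα₀ ε hε S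
  refine ⟨μ.comp p, fun x t => h1 _ t, fun x => h2 _, fun s hs x => ?_⟩
  have := h3 s hs (p x)
  simpa [ContinuousMap.comp_apply, hp s x] using this

/-- Basic neighborhoods in the space of actions. -/
theorem mem_of_close {U : Set (Γ →* (X ≃ₜ X))} {β : Γ →* (X ≃ₜ X)}
    (hU : IsOpen U) (hβ : β ∈ U) :
    ∃ (S : Finset Γ) (ε : ℝ), 0 < ε ∧ ∀ β' : Γ →* (X ≃ₜ X),
      (∀ s ∈ S, (∀ x, dist (β' s x) (β s x) < ε) ∧
        (∀ x, dist ((β' s).symm x) ((β s).symm x) < ε)) → β' ∈ U := by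
  classical
  have hind : Topology.IsInducing (fun α : Γ →* (X ≃ₜ X) => (α : Γ → X ≃ₜ X)) := ⟨rfl⟩
  have hindH : Topology.IsInducing
      (fun φ : X ≃ₜ X => ((φ : C(X, X)), (φ.symm : C(X, X)))) := ⟨rfl⟩
  have h1 : U ∈ 𝓝 β := hU.mem_nhds hβ
  rw [hind.nhds_eq_comap] at h1
  obtain ⟨V, hV, hVU⟩ := Filter.mem_comap.1 h1
  rw [nhds_pi] at hV
  obtain ⟨I, hIfin, W, hW, hsub⟩ := Filter.mem_pi.1 hV
  -- for each s, find a metric ball pair inside W s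
  have hball : ∀ s : Γ, ∃ ε, 0 < ε ∧
      ∀ φ : X ≃ₜ X, dist ((φ : C(X, X))) ((β s : X ≃ₜ X) : C(X, X)) < ε →
        dist ((φ.symm : C(X, X))) (((β s).symm : C(X, X))) < ε → φ ∈ W s := by
    intro s
    have hWs := hW s
    rw [hindH.nhds_eq_comap] at hWs
    obtain ⟨Z, hZ, hZW⟩ := Filter.mem_comap.1 hWs
    rw [mem_nhds_prod_iff] at hZ
    obtain ⟨u, hu, v, hv, huv⟩ := hZ
    obtain ⟨ε1, hε1, hball1⟩ := Metric.mem_nhds_iff.1 hu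
    obtain ⟨ε2, hε2, hball2⟩ := Metric.mem_nhds_iff.1 hv
    refine ⟨min ε1 ε2, lt_min hε1 hε2, fun φ hd1 hd2 => ?_⟩
    apply hZW
    apply huv
    constructor
    · exact hball1 (Metric.mem_ball.2 (lt_of_lt_of_le hd1 (min_le_left _ _)))
    · exact hball2 (Metric.mem_ball.2 (lt_of_lt_of_le hd2 (min_le_right _ _)))
  choose εf hεf hcrit using hball
  set S : Finset Γ := hIfin.toFinset with hS
  obtain ⟨ε, hε, hle⟩ : ∃ ε, 0 < ε ∧ ∀ s ∈ S, ε ≤ εf s := by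
    refine finset_exists_pos (P := fun s δ => δ ≤ εf s) ?_ ?_
    · exact fun s δ δ' h1' h2' h3' => le_trans h2' h3'
    · exact fun s _ => ⟨εf s, hεf s, le_rfl⟩
  refine ⟨S, ε, hε, fun β' hβ' => ?_⟩
  apply hVU
  show (β' : Γ → X ≃ₜ X) ∈ V
  apply hsub
  intro s hsI
  have hsS : s ∈ S := hIfin.mem_toFinset.2 hsI
  obtain ⟨hd1, hd2⟩ := hβ' s hsS
  refine hcrit s (β' s) ?_ ?_
  · rw [ContinuousMap.dist_lt_iff (lt_of_lt_of_le hε (hle s hsS))]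
    intro x
    exact lt_of_lt_of_le (hd1 x) (hle s hsS)
  · rw [ContinuousMap.dist_lt_iff (lt_of_lt_of_le hε (hle s hsS))]
    intro x
    exact lt_of_lt_of_le (hd2 x) (hle s hsS)

end Density

section DenseFinal
variable {Γ X : Type*} [Group Γ] [MetricSpace X] [CompactSpace X] [Nonempty X]

theorem amen_dense
    (hψ : ∀ δ : ℝ, 0 < δ → ∃ ψ : (X × X) ≃ₜ X, ∀ p : X × X, dist (ψ p) p.1 < δ)
    (h : ∃ α₀ : Γ →* (X ≃ₜ X), IsAmenableAction α₀) :
    Dense {α : Γ →* (X ≃ₜ X) | IsAmenableAction α} := by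
  obtain ⟨α₀, hα₀⟩ := h
  rw [dense_iff_inter_open]
  rintro U hU ⟨β, hβ⟩
  obtain ⟨S, ε, hε, hcrit⟩ := mem_of_close hU hβ
  classical
  set S' : Finset Γ := S ∪ S.image (fun s => s⁻¹) with hS'
  have hmod0 : ∃ δ, 0 < δ ∧ ∀ s ∈ S', ∀ a b : X, dist a b < δ → dist (β s a) (β s b) < ε / 2 := by
    refine finset_exists_pos (P := fun s δ => ∀ a b : X, dist a b < δ →
      dist (β s a) (β s b) < ε / 2) ?_ ?_
    · intro s δ δ' h1 h2 h3 a b hab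
      exact h3 a b (lt_of_lt_of_le hab h2)
    · intro s _
      have huc : UniformContinuous (β s) :=
        CompactSpace.uniformContinuous_of_continuous (β s).continuous
      rw [Metric.uniformContinuous_iff] at huc
      obtain ⟨δ, hδ, hd⟩ := huc (ε / 2) (by linarith)
      exact ⟨δ, hδ, fun a b hab => hd hab⟩
  obtain ⟨δ, hδ, hmod⟩ := hmod0
  set δ' := min δ (ε / 2) with hδ'def
  have hδ'pos : 0 < δ' := lt_min hδ (by linarith)
  obtain ⟨ψ, hψs⟩ := hψ δ' hδ'pos
  set β' : Γ →* (X ≃ₜ X) := (conjHom ψ).comp (prodHom β α₀) with hβ'def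
  have hev : ∀ (s : Γ) (z : X), β' s z = ψ (β s (ψ.symm z).1, α₀ s (ψ.symm z).2) :=
    fun s z => rfl
  have hclose : ∀ s ∈ S', ∀ z : X, dist (β' s z) (β s z) < ε := by
    intro s hs z
    have h2 : dist (ψ (β s (ψ.symm z).1, α₀ s (ψ.symm z).2)) (β s (ψ.symm z).1) < δ' :=
      hψs _
    have hz1 : dist (ψ.symm z).1 z < δ := by
      have h4 := hψs (ψ.symm z)
      rw [ψ.apply_symm_apply] at h4
      rw [dist_comm]
      exact lt_of_lt_of_le h4 (le_trans (min_le_left _ _) le_rfl)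
    have h3 : dist (β s (ψ.symm z).1) (β s z) < ε / 2 := hmod s hs _ _ hz1
    calc dist (β' s z) (β s z)
        ≤ dist (β' s z) (β s (ψ.symm z).1) + dist (β s (ψ.symm z).1) (β s z) :=
          dist_triangle _ _ _
      _ < δ' + ε / 2 := by rw [hev]; exact add_lt_add h2 h3
      _ ≤ ε / 2 + ε / 2 := by
          have h5 : δ' ≤ ε / 2 := min_le_right _ _
          linarith
      _ = ε := by ring
  have hU' : β' ∈ U := by
    apply hcrit
    intro s hsS
    have hs1 : s ∈ S' := Finset.mem_union_left _ hsS
    have hs2 : s⁻¹ ∈ S' := Finset.mem_union_right _ (Finset.mem_image_of_mem (fun s => s⁻¹) hsS)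
    refine ⟨fun x => hclose s hs1 x, fun x => ?_⟩
    have e1 : (β' s).symm = β' s⁻¹ := by rw [map_inv]; rfl
    have e2 : (β s).symm = β s⁻¹ := by rw [map_inv]; rfl
    rw [e1, e2]
    exact hclose s⁻¹ hs2 x
  have hamen : IsAmenableAction β' := by
    refine hα₀.factor ⟨fun z => (ψ.symm z).2, continuous_snd.comp ψ.symm.continuous⟩ ?_
    intro s z
    show (ψ.symm (β' s z)).2 = α₀ s (ψ.symm z).2
    rw [hev, ψ.symm_apply_apply]
  exact ⟨β', hU', hamen⟩

end DenseFinal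


end Aux

/-- If a countable group `Γ` admits at least one amenable action on the Cantor set
`X`, then the set of amenable actions is a dense `Gδ` subset of `S(Γ, X)`. -/
theorem amenability_isGdelta_dense (Γ X : Type*) [Group Γ] [Countable Γ]
    [TopologicalSpace X] [CompactSpace X] [MetrizableSpace X]
    [TotallyDisconnectedSpace X] [PerfectSpace X] [Nonempty X]
    (h : ∃ α : Γ →* (X ≃ₜ X), IsAmenableAction α) :
    IsGδ {α : Γ →* (X ≃ₜ X) | IsAmenableAction α} ∧
    Dense {α : Γ →* (X ≃ₜ X) | IsAmenableAction α} := by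
  letI : MetricSpace X := TopologicalSpace.metrizableSpaceMetric X
  exact ⟨amen_isGdelta, amen_dense (fun δ hδ => exists_small_homeo X hδ) h⟩
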